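/- For every real r > 3/2 there exists a constant C_r > 0 such that for every τ ≥ 0 and all a, b, c : ℤ² → [0,∞]: ∑_{(j,k)∈ℤ²×ℤ²} ‖j‖^{r+1/2} ‖k‖^{1/2} ‖j+k‖^{r} e^{τ‖j‖} e^{τ‖k‖} e^{τ‖j+k‖} a(j) b(k) c(j+k) ≤ C_r · S_{r+1/2,τ}(a) · S_{r,τ}(b) · S_{r,τ}(c). -/

import Mathlib

open scoped ENNReal

noncomputable section

/-- Euclidean norm of a lattice point `k ∈ ℤ²` viewed as a vector in `ℝ²`. -/
def nz (k : ℤ × ℤ) : ℝ := Real.sqrt ((k.1 : ℝ) ^ 2 + (k.2 : ℝ) ^ 2)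

/-- The weighted ℓ²-norm `S_{ρ,τ}(a) = (∑_k ‖k‖^{2ρ} e^{2τ‖k‖} a(k)²)^{1/2}`. -/
def S (ρ τ : ℝ) (a : ℤ × ℤ → ℝ≥0∞) : ℝ≥0∞ :=
  (∑' k : ℤ × ℤ, ENNReal.ofReal (nz k ^ (2 * ρ) * Real.exp (2 * τ * nz k)) * (a k) ^ 2)
    ^ ((1 : ℝ) / 2)

lemma nz_nonneg (k : ℤ × ℤ) : 0 ≤ nz k := Real.sqrt_nonneg _

lemma one_le_nz {k : ℤ × ℤ} (hk : k ≠ 0) : 1 ≤ nz k := by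
  have h : (1 : ℝ) ≤ (k.1 : ℝ) ^ 2 + (k.2 : ℝ) ^ 2 := by
    have : k.1 ≠ 0 ∨ k.2 ≠ 0 := by
      by_contra hc
      push_neg at hc
      exact hk (Prod.ext hc.1 hc.2)
    rcases this with h1 | h1
    · have : (1:ℝ) ≤ (k.1:ℝ)^2 := by
        have := Int.one_le_abs h1
        have : (1:ℝ) ≤ |(k.1:ℝ)| := by exact_mod_cast (by simpa using this)
        nlinarith [abs_nonneg ((k.1:ℝ)), sq_abs ((k.1:ℝ))]
      nlinarith [sq_nonneg ((k.2:ℝ))]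
    · have : (1:ℝ) ≤ (k.2:ℝ)^2 := by
        have := Int.one_le_abs h1
        have : (1:ℝ) ≤ |(k.2:ℝ)| := by exact_mod_cast (by simpa using this)
        nlinarith [abs_nonneg ((k.2:ℝ)), sq_abs ((k.2:ℝ))]
      nlinarith [sq_nonneg ((k.1:ℝ))]
  calc (1:ℝ) = Real.sqrt 1 := by simp
  _ ≤ nz k := Real.sqrt_le_sqrt h

lemma abs_fst_le (k : ℤ × ℤ) : |(k.1 : ℝ)| ≤ nz k := by
  rw [← Real.sqrt_sq_eq_abs]
  exact Real.sqrt_le_sqrt (by nlinarith [sq_nonneg ((k.2:ℝ))])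

lemma abs_snd_le (k : ℤ × ℤ) : |(k.2 : ℝ)| ≤ nz k := by
  rw [← Real.sqrt_sq_eq_abs]
  exact Real.sqrt_le_sqrt (by nlinarith [sq_nonneg ((k.1:ℝ))])

/-- Cauchy–Schwarz for `tsum` in `ℝ≥0∞`. -/
lemma tsum_cs (f g : ℤ × ℤ → ℝ≥0∞) :
    ∑' k, f k * g k ≤ (∑' k, f k ^ 2) ^ ((1:ℝ)/2) * (∑' k, g k ^ 2) ^ ((1:ℝ)/2) := by
  have h2 : Real.HolderConjugate 2 2 := Real.HolderConjugate.two_two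
  have hf : AEMeasurable f (MeasureTheory.Measure.count) :=
    (measurable_of_countable f).aemeasurable
  have hg : AEMeasurable g (MeasureTheory.Measure.count) :=
    (measurable_of_countable g).aemeasurable
  have := ENNReal.lintegral_mul_le_Lp_mul_Lq MeasureTheory.Measure.count h2 hf hg
  simp only [MeasureTheory.lintegral_count, Pi.mul_apply] at this
  have h2' : ∀ x : ℝ≥0∞, x ^ (2:ℝ) = x ^ 2 := fun x => by
    rw [show (2:ℝ) = ((2:ℕ):ℝ) by norm_num, ENNReal.rpow_natCast]
  simpa [h2'] using this


lemma summable_aux {p : ℝ} (hp : 1 < p) :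
    Summable (fun n : ℤ => (1 + |(n:ℝ)|) ^ (-p)) := by
  have h0 := (Real.summable_one_div_int_add_rpow (1/2) p).mpr hp
  refine Summable.of_nonneg_of_le (fun n => Real.rpow_nonneg (by positivity) _) (fun n => ?_) h0
  have h1 : (0:ℝ) < |(n:ℝ) + 1/2| := by
    rw [abs_pos]
    intro h
    have : (2*n : ℝ) = -1 := by linarith
    have : (2*n : ℤ) = -1 := by exact_mod_cast this
    omega
  have h2 : |(n:ℝ) + 1/2| ≤ 1 + |(n:ℝ)| := by
    calc |(n:ℝ) + 1/2| ≤ |(n:ℝ)| + |(1/2 : ℝ)| := abs_add_le _ _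
    _ = |(n:ℝ)| + 1/2 := by norm_num
    _ ≤ 1 + |(n:ℝ)| := by linarith
  rw [Real.rpow_neg (by positivity), ← one_div]
  apply one_div_le_one_div_of_le (Real.rpow_pos_of_pos h1 p)
  exact Real.rpow_le_rpow h1.le h2 (by linarith)

lemma K_ne_top {r : ℝ} (hr : 3/2 < r) :
    (∑' k : ℤ × ℤ, ENNReal.ofReal (nz k ^ (1 - 2*r))) ≠ ⊤ := by
  set p : ℝ := r - 1/2 with hp_def
  have hp : 1 < p := by simp [hp_def]; linarith
  set u : ℤ → ℝ≥0∞ := fun n => ENNReal.ofReal ((1 + |(n:ℝ)|) ^ (-p)) with hu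
  have hbound : ∀ k : ℤ × ℤ,
      ENNReal.ofReal (nz k ^ (1 - 2*r)) ≤ ENNReal.ofReal (2 ^ (2*p)) * (u k.1 * u k.2) := by
    intro k
    by_cases hk : k = 0
    · subst hk
      rw [show nz 0 = 0 by simp [nz], Real.zero_rpow (by intro h; linarith : (1 : ℝ) - 2*r ≠ 0)]
      simp
    · have hx1 : (1:ℝ) ≤ nz k := one_le_nz hk
      have hx0 : (0:ℝ) < nz k := by linarith
      set x := nz k
      set A : ℝ := 1 + |(k.1:ℝ)| with hA
      set B : ℝ := 1 + |(k.2:ℝ)| with hB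
      have hA0 : (0:ℝ) < A := by positivity
      have hB0 : (0:ℝ) < B := by positivity
      have hAx : A ≤ 2 * x := by have := abs_fst_le k; simp only [hA]; linarith
      have hBx : B ≤ 2 * x := by have := abs_snd_le k; simp only [hB]; linarith
      have h1' : A * B ≤ (2*x) ^ (2:ℕ) := by nlinarith
      have h1 : A * B ≤ (2*x) ^ (2:ℝ) := by
        rw [← Real.rpow_natCast (2*x) 2] at h1'
        exact_mod_cast h1'
      have h2 : (A*B) ^ p ≤ 2 ^ (2*p) * x ^ (2*p) := by
        calc (A*B) ^ p ≤ ((2*x) ^ (2:ℝ)) ^ p :=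
              Real.rpow_le_rpow (by positivity) h1 (by linarith)
        _ = (2*x) ^ (2*p) := by rw [← Real.rpow_mul (by positivity)]
        _ = 2 ^ (2*p) * x ^ (2*p) := Real.mul_rpow (by norm_num) hx0.le
      rw [← ENNReal.ofReal_mul (by positivity), ← ENNReal.ofReal_mul (by positivity)]
      apply ENNReal.ofReal_le_ofReal
      have hexp : (1:ℝ) - 2*r = -(2*p) := by simp [hp_def]; ring
      have hxp : (0:ℝ) < x ^ (2*p) := Real.rpow_pos_of_pos hx0 _
      have hab : (0:ℝ) < (A*B) ^ p := Real.rpow_pos_of_pos (by positivity) _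
      rw [hexp, Real.rpow_neg hx0.le, Real.rpow_neg hA0.le, Real.rpow_neg hB0.le,
        ← mul_inv, ← Real.mul_rpow hA0.le hB0.le,
        show (2:ℝ) ^ (2*p) * ((A*B) ^ p)⁻¹ = 2 ^ (2*p) / (A*B) ^ p from by ring,
        inv_eq_one_div, div_le_div_iff₀ hxp hab]
      linarith [h2]
  have hT : (∑' n : ℤ, u n) ≠ ⊤ := by
    rw [hu, ← ENNReal.ofReal_tsum_of_nonneg (fun n => Real.rpow_nonneg (by positivity) _)
      (summable_aux hp)]
    exact ENNReal.ofReal_ne_top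
  have hle : (∑' k : ℤ × ℤ, ENNReal.ofReal (nz k ^ (1 - 2*r)))
      ≤ ENNReal.ofReal (2 ^ (2*p)) * ((∑' n : ℤ, u n) * (∑' n : ℤ, u n)) := by
    calc (∑' k : ℤ × ℤ, ENNReal.ofReal (nz k ^ (1 - 2*r)))
        ≤ ∑' k : ℤ × ℤ, ENNReal.ofReal (2 ^ (2*p)) * (u k.1 * u k.2) :=
          ENNReal.tsum_le_tsum hbound
    _ = ENNReal.ofReal (2 ^ (2*p)) * ∑' k : ℤ × ℤ, u k.1 * u k.2 := ENNReal.tsum_mul_left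
    _ = ENNReal.ofReal (2 ^ (2*p)) * ((∑' n : ℤ, u n) * (∑' n : ℤ, u n)) := by
        rw [ENNReal.tsum_prod']
        congr 1
        calc ∑' (i : ℤ), ∑' (j : ℤ), u i * u j = ∑' (i : ℤ), u i * ∑' (j : ℤ), u j :=
          tsum_congr fun i => ENNReal.tsum_mul_left
        _ = _ := ENNReal.tsum_mul_right
  exact ne_top_of_le_ne_top (by finiteness) hle


lemma sq_weight (ρ τ x : ℝ) (hx : 0 ≤ x) :
    ENNReal.ofReal (x ^ ρ * Real.exp (τ * x)) ^ 2
      = ENNReal.ofReal (x ^ (2*ρ) * Real.exp (2*τ*x)) := by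
  rw [← ENNReal.ofReal_pow (by positivity)]
  congr 1
  rw [mul_pow]
  congr 1
  · rw [← Real.rpow_natCast (x ^ ρ) 2, ← Real.rpow_mul hx]
    congr 1
    push_cast; ring
  · rw [← Real.exp_nat_mul]
    congr 1
    push_cast; ring

theorem trilinear_B1_term :
    ∀ r : ℝ, 3 / 2 < r → ∃ C : ℝ, 0 < C ∧ ∀ τ : ℝ, 0 ≤ τ → ∀ a b c : ℤ × ℤ → ℝ≥0∞,
      (∑' p : (ℤ × ℤ) × (ℤ × ℤ),
          ENNReal.ofReal (nz p.1 ^ (r + 1 / 2) * nz p.2 ^ ((1 : ℝ) / 2)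
              * nz (p.1 + p.2) ^ r
              * Real.exp (τ * nz p.1) * Real.exp (τ * nz p.2)
              * Real.exp (τ * nz (p.1 + p.2)))
            * a p.1 * b p.2 * c (p.1 + p.2))
        ≤ ENNReal.ofReal C * S (r + 1 / 2) τ a * S r τ b * S r τ c := by
  intro r hr
  set K : ℝ≥0∞ := ∑' k : ℤ × ℤ, ENNReal.ofReal (nz k ^ (1 - 2*r)) with hK_def
  have hK : K ≠ ⊤ := K_ne_top hr
  have hK12 : K ^ ((1:ℝ)/2) ≠ ⊤ := ENNReal.rpow_ne_top_of_nonneg (by norm_num) hK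
  refine ⟨(K ^ ((1:ℝ)/2)).toReal + 1, by positivity, ?_⟩
  intro τ hτ a b c
  set F : ℤ × ℤ → ℝ≥0∞ := fun j => ENNReal.ofReal (nz j ^ (r + 1/2) * Real.exp (τ * nz j)) * a j with hF
  set G : ℤ × ℤ → ℝ≥0∞ := fun k => ENNReal.ofReal (nz k ^ r * Real.exp (τ * nz k)) * b k with hG
  set H : ℤ × ℤ → ℝ≥0∞ := fun m => ENNReal.ofReal (nz m ^ r * Real.exp (τ * nz m)) * c m with hH
  set w : ℤ × ℤ → ℝ≥0∞ := fun k => ENNReal.ofReal (nz k ^ ((1:ℝ)/2 - r)) with hw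
  set SA : ℝ≥0∞ := (∑' j, F j ^ 2) ^ ((1:ℝ)/2) with hSA
  set SB : ℝ≥0∞ := (∑' k, G k ^ 2) ^ ((1:ℝ)/2) with hSB
  set SC : ℝ≥0∞ := (∑' m, H m ^ 2) ^ ((1:ℝ)/2) with hSC
  -- identify S with SA, SB, SC
  have hS : ∀ (ρ : ℝ) (d : ℤ × ℤ → ℝ≥0∞),
      S ρ τ d = (∑' k, (ENNReal.ofReal (nz k ^ ρ * Real.exp (τ * nz k)) * d k) ^ 2) ^ ((1:ℝ)/2) := by
    intro ρ d
    unfold S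
    congr 1
    refine tsum_congr fun k => ?_
    rw [mul_pow, sq_weight ρ τ (nz k) (nz_nonneg k)]
  have hSa : S (r + 1/2) τ a = SA := by rw [hS, hSA]
  have hSb : S r τ b = SB := by rw [hS, hSB]
  have hSc : S r τ c = SC := by rw [hS, hSC]
  -- pointwise identity
  have hterm : ∀ j k : ℤ × ℤ,
      ENNReal.ofReal (nz j ^ (r + 1 / 2) * nz k ^ ((1 : ℝ) / 2) * nz (j + k) ^ r
          * Real.exp (τ * nz j) * Real.exp (τ * nz k) * Real.exp (τ * nz (j + k)))
        * a j * b k * c (j + k)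
      = (w k * G k) * (F j * H (j + k)) := by
    intro j k
    have hk2 : nz k ^ ((1:ℝ)/2) = nz k ^ ((1:ℝ)/2 - r) * nz k ^ r := by
      rw [← Real.rpow_add' (nz_nonneg k) (by norm_num)]
      norm_num
    have hre : nz j ^ (r + 1 / 2) * nz k ^ ((1 : ℝ) / 2) * nz (j + k) ^ r
          * Real.exp (τ * nz j) * Real.exp (τ * nz k) * Real.exp (τ * nz (j + k))
        = (nz k ^ ((1:ℝ)/2 - r)) * ((nz k ^ r * Real.exp (τ * nz k))
            * ((nz j ^ (r + 1/2) * Real.exp (τ * nz j))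
              * (nz (j + k) ^ r * Real.exp (τ * nz (j + k))))) := by
      rw [hk2]; ring
    have split : ∀ x y z t : ℝ, 0 ≤ x → 0 ≤ y → 0 ≤ z →
        ENNReal.ofReal (x * (y * (z * t)))
          = ENNReal.ofReal x * (ENNReal.ofReal y * (ENNReal.ofReal z * ENNReal.ofReal t)) := by
      intro x y z t hx hy hz
      rw [ENNReal.ofReal_mul hx, ENNReal.ofReal_mul hy, ENNReal.ofReal_mul hz]
    have e1 : (0:ℝ) ≤ nz k ^ ((1:ℝ)/2 - r) := Real.rpow_nonneg (nz_nonneg k) _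
    have e2 : (0:ℝ) ≤ nz k ^ r * Real.exp (τ * nz k) :=
      mul_nonneg (Real.rpow_nonneg (nz_nonneg k) _) (Real.exp_pos _).le
    have e3 : (0:ℝ) ≤ nz j ^ (r + 1/2) * Real.exp (τ * nz j) :=
      mul_nonneg (Real.rpow_nonneg (nz_nonneg j) _) (Real.exp_pos _).le
    rw [hre, split _ _ _ _ e1 e2 e3]
    simp only [hF, hG, hH, hw]
    ring
  have hw2 : ∀ k, w k ^ 2 = ENNReal.ofReal (nz k ^ (1 - 2*r)) := by
    intro k
    rw [hw]
    rw [← ENNReal.ofReal_pow (Real.rpow_nonneg (nz_nonneg k) _),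
      ← Real.rpow_natCast (nz k ^ _) 2, ← Real.rpow_mul (nz_nonneg k)]
    congr 2
    push_cast; ring
  have hinner : ∀ k : ℤ × ℤ, (∑' j, F j * H (j + k)) ≤ SA * SC := by
    intro k
    calc (∑' j, F j * H (j + k))
        ≤ (∑' j, F j ^ 2) ^ ((1:ℝ)/2) * (∑' j, H (j + k) ^ 2) ^ ((1:ℝ)/2) :=
          tsum_cs F (fun j => H (j + k))
    _ = SA * SC := by
        rw [hSA, hSC]
        congr 2
        simpa using (Equiv.addRight k).tsum_eq (fun m => H m ^ 2)
  calc (∑' p : (ℤ × ℤ) × (ℤ × ℤ),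
          ENNReal.ofReal (nz p.1 ^ (r + 1 / 2) * nz p.2 ^ ((1 : ℝ) / 2)
              * nz (p.1 + p.2) ^ r
              * Real.exp (τ * nz p.1) * Real.exp (τ * nz p.2)
              * Real.exp (τ * nz (p.1 + p.2)))
            * a p.1 * b p.2 * c (p.1 + p.2))
      = ∑' p : (ℤ × ℤ) × (ℤ × ℤ), (w p.2 * G p.2) * (F p.1 * H (p.1 + p.2)) :=
        tsum_congr fun p => hterm p.1 p.2
  _ = ∑' j : ℤ × ℤ, ∑' k : ℤ × ℤ, (w k * G k) * (F j * H (j + k)) := ENNReal.tsum_prod'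
  _ = ∑' k : ℤ × ℤ, ∑' j : ℤ × ℤ, (w k * G k) * (F j * H (j + k)) := ENNReal.tsum_comm
  _ = ∑' k : ℤ × ℤ, (w k * G k) * ∑' j : ℤ × ℤ, F j * H (j + k) :=
      tsum_congr fun k => ENNReal.tsum_mul_left
  _ ≤ ∑' k : ℤ × ℤ, (w k * G k) * (SA * SC) :=
      ENNReal.tsum_le_tsum fun k => mul_le_mul_right (hinner k) _
  _ = (∑' k : ℤ × ℤ, w k * G k) * (SA * SC) := ENNReal.tsum_mul_right
  _ ≤ ((∑' k, w k ^ 2) ^ ((1:ℝ)/2) * (∑' k, G k ^ 2) ^ ((1:ℝ)/2)) * (SA * SC) :=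
      mul_le_mul_left (tsum_cs w G) _
  _ = (K ^ ((1:ℝ)/2) * SB) * (SA * SC) := by
      rw [hSB, hK_def]
      congr 3
      exact tsum_congr hw2
  _ = K ^ ((1:ℝ)/2) * SA * SB * SC := by ring
  _ ≤ ENNReal.ofReal ((K ^ ((1:ℝ)/2)).toReal + 1) * SA * SB * SC := by
      gcongr
      conv_lhs => rw [← ENNReal.ofReal_toReal hK12]
      exact ENNReal.ofReal_le_ofReal (by linarith)
  _ = ENNReal.ofReal ((K ^ ((1:ℝ)/2)).toReal + 1) * S (r + 1/2) τ a * S r τ b * S r τ c := by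
      rw [hSa, hSb, hSc]

end
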